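/- Let ω ∈ (0, π) satisfy ω + tan ω = 0, and for each nonnegative integer k let a_k be the unique solution of 2πk = 2πβ·sqrt(1 - (1/(2πβ))²) - arccos(1/(2πβ)) and b_k the unique solution of 2πk = 2πβ·sqrt(1 - (sec ω/(2πβ))²) - arccos(sec ω/(2πβ)). Then a_k < b_k for every k. -/

import Mathlib

open Real

lemma aux_tan_mono : StrictMonoOn (fun x => Real.tan x - x) (Set.Ico 0 (π/2)) := by
  apply strictMonoOn_of_deriv_pos (convex_Ico 0 (π/2))
  · apply ContinuousOn.sub _ continuousOn_id
    apply Real.continuousOn_tan.mono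
    intro x hx
    have : 0 < Real.cos x := Real.cos_pos_of_mem_Ioo ⟨by linarith [hx.1, Real.pi_pos], hx.2⟩
    exact this.ne'
  · intro x hx
    rw [interior_Ico] at hx
    have hc : 0 < Real.cos x := Real.cos_pos_of_mem_Ioo ⟨by linarith [hx.1, Real.pi_pos], hx.2⟩
    have hd : HasDerivAt (fun y => Real.tan y - y) (1 / Real.cos x ^ 2 - 1) x :=
      (Real.hasDerivAt_tan hc.ne').sub (hasDerivAt_id x)
    rw [hd.deriv]
    have hc1 : Real.cos x < 1 := by
      have := Real.strictAntiOn_cos ⟨le_rfl, Real.pi_pos.le⟩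
        ⟨hx.1.le, by linarith [hx.2, Real.pi_pos]⟩ hx.1
      simpa using this
    have h2 : Real.cos x ^ 2 < 1 := by nlinarith
    have : 1 < 1 / Real.cos x ^ 2 := (one_lt_div (by positivity)).2 h2
    linarith

lemma aux_sqrt_id (α t : ℝ) (ht : 0 < t) :
    t * Real.sqrt (1 - (α/t)^2) = Real.sqrt (t^2 - α^2) := by
  rw [show t^2 - α^2 = t^2 * (1 - (α/t)^2) by field_simp]
  rw [Real.sqrt_mul (sq_nonneg t), Real.sqrt_sq ht.le]

lemma aux_g1_mono : StrictMonoOn (fun t => Real.sqrt (t^2 - 1) - Real.arccos (1/t)) (Set.Ici 1) := by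
  intro s hs t ht hst
  simp only [Set.mem_Ici] at hs ht
  have hs0 : (0:ℝ) < s := by linarith
  have ht0 : (0:ℝ) < t := by linarith
  have hval : ∀ u : ℝ, 1 ≤ u →
      Real.sqrt (u^2 - 1) - Real.arccos (1/u) =
        Real.tan (Real.arccos (1/u)) - Real.arccos (1/u) := by
    intro u hu
    have hu0 : (0:ℝ) < u := by linarith
    have hid := aux_sqrt_id 1 u hu0
    rw [mul_comm] at hid
    rw [Real.tan_arccos]
    rw [div_div_eq_mul_div, div_one, hid, one_pow]
  simp only
  rw [hval s hs, hval t ht]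
  have hms : Real.arccos (1/s) ∈ Set.Ico 0 (π/2) :=
    ⟨Real.arccos_nonneg _, Real.arccos_lt_pi_div_two.2 (by positivity)⟩
  have hmt : Real.arccos (1/t) ∈ Set.Ico 0 (π/2) :=
    ⟨Real.arccos_nonneg _, Real.arccos_lt_pi_div_two.2 (by positivity)⟩
  have hlt : Real.arccos (1/s) < Real.arccos (1/t) := by
    apply Real.strictAntiOn_arccos
      ⟨le_trans (by norm_num : (-1:ℝ) ≤ 0) (by positivity), by rw [div_le_one ht0]; linarith⟩
      ⟨le_trans (by norm_num : (-1:ℝ) ≤ 0) (by positivity), by rw [div_le_one hs0]; linarith⟩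
      (one_div_lt_one_div_of_lt hs0 hst)
  exact aux_tan_mono hms hmt hlt

theorem stmt_5 (ω : ℝ) (hω : ω ∈ Set.Ioo 0 π) (hωeq : ω + Real.tan ω = 0)
    (a b : ℕ → ℝ)
    (ha : ∀ k, 1 / (2 * π) ≤ a k ∧
      2 * π * k = 2 * π * a k * Real.sqrt (1 - (1 / (2 * π * a k)) ^ 2)
        - Real.arccos (1 / (2 * π * a k)))
    (hb : ∀ k, |(Real.cos ω)⁻¹| / (2 * π) ≤ b k ∧
      2 * π * k = 2 * π * b k * Real.sqrt (1 - ((Real.cos ω)⁻¹ / (2 * π * b k)) ^ 2)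
        - Real.arccos ((Real.cos ω)⁻¹ / (2 * π * b k))) :
    ∀ k, a k < b k := by
  have hpi := Real.pi_pos
  obtain ⟨hω0, hωπ⟩ := hω
  -- ω is in (π/2, π)
  have hω2 : π / 2 < ω := by
    rcases lt_trichotomy ω (π / 2) with h | h | h
    · have := Real.tan_pos_of_pos_of_lt_pi_div_two hω0 h
      linarith
    · rw [h, Real.tan_pi_div_two] at hωeq; linarith
    · exact h
  have hcos_neg : Real.cos ω < 0 :=
    Real.cos_neg_of_pi_div_two_lt_of_lt hω2 (by linarith [hωπ])
  have hcos_gt : -1 < Real.cos ω := by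
    have := Real.strictAntiOn_cos ⟨hω0.le, hωπ.le⟩ ⟨hpi.le, le_rfl⟩ hωπ
    simpa using this
  set c : ℝ := (Real.cos ω)⁻¹ with hc
  have hcprod : c * Real.cos ω = 1 := inv_mul_cancel₀ hcos_neg.ne
  have hcneg : c < 0 := inv_lt_zero.2 hcos_neg
  have hc1 : c < -1 := by nlinarith
  have habs : |c| = -c := abs_of_neg hcneg
  intro k
  obtain ⟨ha1, ha2⟩ := ha k
  obtain ⟨hb1, hb2⟩ := hb k
  set A : ℝ := 2 * π * a k with hA
  set B : ℝ := 2 * π * b k with hB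
  have h2pi : (0:ℝ) < 2 * π := by positivity
  have hA1 : 1 ≤ A := by
    have h1 := (div_le_iff₀ h2pi).1 ha1
    have h2 : a k * (2 * π) = A := by rw [hA]; ring
    linarith
  have hB1 : -c ≤ B := by
    have h1 := (div_le_iff₀ h2pi).1 hb1
    have h2 : b k * (2 * π) = B := by rw [hB]; ring
    rw [habs] at h1
    linarith
  have hA0 : (0:ℝ) < A := by linarith
  have hB0 : (0:ℝ) < B := by linarith
  have hBc : 1 < B := by linarith
  -- rewrite equations
  rw [aux_sqrt_id 1 A hA0, one_pow] at ha2
  rw [aux_sqrt_id c B hB0] at hb2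
  -- comparison at B
  have hsq : Real.sqrt (B^2 - c^2) < Real.sqrt (B^2 - 1) := by
    apply Real.sqrt_lt_sqrt
    · nlinarith
    · nlinarith
  have harc : Real.arccos (1/B) < Real.arccos (c/B) := by
    apply Real.strictAntiOn_arccos
    · constructor
      · rw [neg_le, ← neg_div, div_le_one hB0]; exact hB1
      · have : c / B < 0 := div_neg_of_neg_of_pos hcneg hB0
        linarith
    · constructor
      · have : (0:ℝ) < 1 / B := by positivity
        linarith
      · rw [div_le_one hB0]; linarith
    · apply div_lt_div_of_pos_right _ hB0; linarith
  have hglt : Real.sqrt (A^2 - 1) - Real.arccos (1/A) <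
      Real.sqrt (B^2 - 1) - Real.arccos (1/B) := by
    rw [← ha2]; rw [hb2]; linarith
  have hAB : A < B := by
    have := (aux_g1_mono.lt_iff_lt (Set.mem_Ici.2 hA1) (Set.mem_Ici.2 hBc.le)).1
    exact this hglt
  rw [hA, hB] at hAB
  exact lt_of_mul_lt_mul_left hAB h2pi.le
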